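/- The subgroups Fix₀(κ,i) and Small₀(κ,[0,α)) of A₀ satisfy the normality property: (i) for every π ∈ A₀, every κ ∈ Card and every i < F_lim(κ), π⁻¹ · Fix₀(κ,i) · π = Fix₀(κ,j), where j is determined by π(κ)(κ,j) = (κ,i); (ii) for every π ∈ A₀, every κ ∈ Card and every limit ordinal α ≤ F_lim(κ), there exist finitely many subgroups B₀,…,B_{n−1}, each of the form Fix₀(κ′,i′) or Small₀(κ′,[0,α′)), such that π⁻¹ · Small₀(κ,[0,α)) · π ⊇ B₀ ∩ ⋯ ∩ B_{n−1}. -/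

import Mathlib

noncomputable section

open Classical

/-- Ordinals (in the base universe). -/
abbrev Ord0 : Type 1 := Ordinal.{0}
/-- Cardinals (in the base universe). -/
abbrev Card0 : Type 1 := Cardinal.{0}

/-- Vertices of trees: pairs (κ, i) of a cardinal (the level) and an ordinal (the index). -/
abbrev Vertex : Type 1 := Card0 × Ord0

/-- κ is a successor cardinal. -/
def IsSuccCard (κ : Card0) : Prop := ∃ μ : Card0, Cardinal.aleph0 ≤ μ ∧ κ = Order.succ μ

/-- κ is an (infinite) limit cardinal. -/
def IsLimitCard (κ : Card0) : Prop := Cardinal.aleph0 ≤ κ ∧ ¬ IsSuccCard κ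

/-- The modified function F_lim. -/
def FlimOf (F : Card0 → Card0) (κ : Card0) : Card0 :=
  if κ < Cardinal.aleph Ordinal.omega0 then F Cardinal.aleph0
  else if IsLimitCard κ then F κ
  else F (sSup {lam : Card0 | lam < κ ∧ IsLimitCard lam})

/-- A set (of objects living in `Type 1`) has cardinality < κ. -/
def SetCardLT {α : Type 1} (S : Set α) (κ : Card0) : Prop :=
  Cardinal.mk ↥S < Cardinal.lift.{1} κ

/-- Raw data for conditions in ℙ₀: a set of vertices, a binary relation on vertices and
a valuation assigning to each vertex a partial 0-1-function on ordinals. -/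
structure RawP0 : Type 1 where
  verts : Set Vertex
  le : Vertex → Vertex → Prop
  val : Vertex → Ord0 → Option Bool

/-- Domain of the partial function attached to vertex v. -/
def dom0 (p : RawP0) (v : Vertex) : Set Ord0 := {ζ | p.val v ζ ≠ none}

/-- (t, le) is an F_lim-tree. -/
def IsFlimTree (Flim : Card0 → Card0) (t : Set Vertex) (le : Vertex → Vertex → Prop) : Prop :=
  (∀ v ∈ t, (v.1 = 0 ∧ v.2 = 0) ∨ (Cardinal.aleph0 ≤ v.1 ∧ v.2 < (Flim v.1).ord)) ∧
  (∀ a b, le a b → a ∈ t ∧ b ∈ t) ∧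
  (∀ v ∈ t, le v v) ∧
  (∀ a b c, le a b → le b c → le a c) ∧
  (∀ a b, le a b → le b a → a = b) ∧
  (∀ a b, le a b → a.1 ≤ b.1) ∧
  (∀ b ∈ t, ∀ κ : Card0, (κ = 0 ∨ Cardinal.aleph0 ≤ κ) → κ < b.1 →
      ∃! i : Ord0, (κ, i) ∈ t ∧ le (κ, i) b) ∧
  (∃ M : Finset Vertex, ↑M ⊆ t ∧ ∀ v ∈ t, ∃ m ∈ M, le v m) ∧
  (∀ κ : Card0, IsLimitCard κ → Cardinal.aleph0 < κ → ∀ i i' : Ord0,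
      (κ, i) ∈ t → (κ, i') ∈ t →
      ({w | le w (κ, i) ∧ w ≠ (κ, i)} = {w | le w (κ, i') ∧ w ≠ (κ, i')}) → i = i')

/-- p is a condition of the forcing ℙ₀. -/
def IsP0 (F : Card0 → Card0) (p : RawP0) : Prop :=
  IsFlimTree (FlimOf F) p.verts p.le ∧
  (∀ v, v ∉ p.verts → ∀ ζ, p.val v ζ = none) ∧
  (∀ v ∈ p.verts, ∀ μ : Card0, Cardinal.aleph0 ≤ μ → v.1 = Order.succ μ →
      (∀ ζ ∈ dom0 p v, μ.ord ≤ ζ ∧ ζ < v.1.ord) ∧ SetCardLT (dom0 p v) v.1) ∧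
  (∀ v ∈ p.verts, v.1 = Cardinal.aleph0 →
      (∀ ζ ∈ dom0 p v, ζ < Cardinal.aleph0.ord) ∧ (dom0 p v).Finite) ∧
  (∀ v ∈ p.verts, (v.1 = 0 ∨ (IsLimitCard v.1 ∧ Cardinal.aleph0 < v.1)) →
      ∀ ζ, p.val v ζ = none) ∧
  (∀ v ∈ p.verts, IsLimitCard v.1 → (v.1).IsRegular →
      SetCardLT {ζ : Ord0 | ∃ w, w ∈ p.verts ∧ IsSuccCard w.1 ∧ p.le w v ∧ ζ ∈ dom0 p w} v.1)

/-- t(q) extends t(p) as an F_lim-tree. -/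
def treeLe (q p : RawP0) : Prop :=
  p.verts ⊆ q.verts ∧ ∀ a b, p.le a b → q.le a b

/-- The partial order ≤₀ on conditions of ℙ₀. -/
def le0 (q p : RawP0) : Prop :=
  treeLe q p ∧ ∀ v ∈ p.verts, ∀ ζ b, p.val v ζ = some b → q.val v ζ = some b

/-- The class of conditions of ℙ₀. -/
def P0set (F : Card0 → Card0) : Set RawP0 := {p | IsP0 F p}

/-- Compatibility with common extension in a given subclass S. -/
def Compat0In (S : Set RawP0) (p q : RawP0) : Prop := ∃ r ∈ S, le0 r p ∧ le0 r q

/-- Compatibility in ℙ₀. -/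
def Compat0 (F : Card0 → Card0) (p q : RawP0) : Prop := Compat0In (P0set F) p q

/-- The height of p is at most lam. -/
def heightLE (p : RawP0) (lam : Card0) : Prop := ∀ v ∈ p.verts, v.1 ≤ lam

/-- The group A₀ of ℙ₀-automorphisms: for each level κ a finite-support permutation of the
indices {i : i < F_lim(κ)}, which is the identity above some height and at all non-levels. -/
structure A0 (F : Card0 → Card0) : Type 1 where
  π : Card0 → (Ord0 ≃ Ord0)
  maps : ∀ κ i, Cardinal.aleph0 ≤ κ → (i < (FlimOf F κ).ord ↔ π κ i < (FlimOf F κ).ord)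
  finsupp : ∀ κ, {i | π κ i ≠ i}.Finite
  ht : Card0
  above : ∀ κ, ht ≤ κ → π κ = Equiv.refl Ord0
  notinf : ∀ κ, ¬ Cardinal.aleph0 ≤ κ → π κ = Equiv.refl Ord0

/-- The action of a ∈ A₀ on conditions, relabelling vertices: (a p)(π(κ)(κ,i)) = p(κ,i). -/
def A0.act {F : Card0 → Card0} (a : A0 F) (p : RawP0) : RawP0 where
  verts := {v | (v.1, (a.π v.1).symm v.2) ∈ p.verts}
  le := fun x y => p.le (x.1, (a.π x.1).symm x.2) (y.1, (a.π y.1).symm y.2)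
  val := fun v => p.val (v.1, (a.π v.1).symm v.2)

/-- a ∈ A₀ is small: every index is moved only within its interval [γ, γ+ω), γ a limit
ordinal (or 0). -/
def IsSmall0 {F : Card0 → Card0} (a : A0 F) : Prop :=
  ∀ κ i, ∃ γ : Ord0, (γ = 0 ∨ Order.IsSuccLimit γ) ∧ γ ≤ i ∧ i < γ + Ordinal.omega0 ∧
    γ ≤ a.π κ i ∧ a.π κ i < γ + Ordinal.omega0

/-- The subgroup Fix₀(κ,i) of A₀. -/
def Fix0 (F : Card0 → Card0) (κ : Card0) (i : Ord0) : Set (A0 F) :=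
  {a | a.π κ i = i}

/-- The subgroup Small₀(κ,[0,α)) of A₀. -/
def Small0 (F : Card0 → Card0) (κ : Card0) (α : Ord0) : Set (A0 F) :=
  {a | ∀ i < α, ∃ γ : Ord0, (γ = 0 ∨ Order.IsSuccLimit γ) ∧ γ ≤ i ∧ i < γ + Ordinal.omega0 ∧
        γ ≤ a.π κ i ∧ a.π κ i < γ + Ordinal.omega0}

/-- b = π⁻¹ ∘ c ∘ π, where π = a; i.e. b is the conjugate π⁻¹ c π. -/
def ConjEq {F : Card0 → Card0} (a b c : A0 F) : Prop :=
  ∀ κ, b.π κ = ((a.π κ).trans (c.π κ)).trans (a.π κ).symm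

/-- Subgroups of the two basic forms Fix₀(κ,i), Small₀(λ,[0,α)). -/
def IsBasicSub0 (F : Card0 → Card0) (B : Set (A0 F)) : Prop :=
  (∃ κ i, Cardinal.aleph0 ≤ κ ∧ i < (FlimOf F κ).ord ∧ B = Fix0 F κ i) ∨
  (∃ κ α, Cardinal.aleph0 ≤ κ ∧ Order.IsSuccLimit α ∧ α ≤ (FlimOf F κ).ord ∧ B = Small0 F κ α)


lemma blockOf (i : Ord0) :
    ∃ γ : Ord0, (γ = 0 ∨ Order.IsSuccLimit γ) ∧ γ ≤ i ∧ i < γ + Ordinal.omega0 := by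
  refine ⟨Ordinal.omega0 * (i / Ordinal.omega0), ?_, Ordinal.mul_div_le i _, ?_⟩
  · rcases eq_or_ne (i / Ordinal.omega0) 0 with h | h
    · left; simp [h]
    · right
      exact Ordinal.isSuccLimit_mul_left Ordinal.isSuccLimit_omega0 (pos_iff_ne_zero.2 h)
  · conv_lhs => rw [← Ordinal.div_add_mod i Ordinal.omega0]
    exact (add_lt_add_iff_left _).2 (Ordinal.mod_lt i Ordinal.omega0_ne_zero)

lemma A0.maps_symm {F : Card0 → Card0} (a : A0 F) (κ : Card0) (i : Ord0)
    (hκ : Cardinal.aleph0 ≤ κ) :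
    i < (FlimOf F κ).ord ↔ (a.π κ).symm i < (FlimOf F κ).ord := by
  simpa using (a.maps κ ((a.π κ).symm i) hκ).symm

/-- The conjugate a b a⁻¹ (so that b = (conj)⁻¹-conjugated back). -/
def conjA0 {F : Card0 → Card0} (a b : A0 F) : A0 F where
  π κ := ((a.π κ).symm.trans (b.π κ)).trans (a.π κ)
  maps κ i hκ := by
    simp only [Equiv.trans_apply]
    exact ((A0.maps_symm a κ i hκ).trans (b.maps κ _ hκ)).trans (a.maps κ _ hκ)
  finsupp κ := by
    apply ((b.finsupp κ).image (a.π κ)).subset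
    intro i hi
    simp only [Set.mem_setOf_eq, Equiv.trans_apply] at hi
    refine ⟨(a.π κ).symm i, fun h => hi ?_, by simp⟩
    rw [h]; simp
  ht := max a.ht b.ht
  above κ h := by
    ext x
    simp [a.above κ (le_trans (le_max_left _ _) h), b.above κ (le_trans (le_max_right _ _) h)]
  notinf κ h := by
    ext x
    simp [a.notinf κ h, b.notinf κ h]

lemma conjA0_spec {F : Card0 → Card0} (a b : A0 F) : ConjEq a b (conjA0 a b) := by
  intro κ
  ext x
  simp [conjA0]

lemma conjA0_apply {F : Card0 → Card0} (a b : A0 F) (κ : Card0) (i : Ord0) :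
    (conjA0 a b).π κ i = a.π κ (b.π κ ((a.π κ).symm i)) := rfl

/-- The normality property for the subgroups Fix₀(κ,i) and
Small₀(κ,[0,α)) of A₀:
(i) π⁻¹·Fix₀(κ,i)·π = Fix₀(κ,j), where j is determined by π(κ)(κ,j) = (κ,i);
(ii) π⁻¹·Small₀(κ,[0,α))·π contains a finite intersection of basic subgroups. -/
theorem statement8 (F : Card0 → Card0)
    (hF : ∀ κ, Cardinal.aleph0 ≤ κ → Order.succ (Order.succ κ) ≤ F κ)
    (hFmono : ∀ κ lam, Cardinal.aleph0 ≤ κ → κ ≤ lam → F κ ≤ F lam) :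
    -- (i)
    (∀ a : A0 F, ∀ κ : Card0, Cardinal.aleph0 ≤ κ → ∀ i : Ord0, i < (FlimOf F κ).ord →
      ∀ b : A0 F, (∃ c ∈ Fix0 F κ i, ConjEq a b c) ↔ b ∈ Fix0 F κ ((a.π κ).symm i)) ∧
    -- (ii)
    (∀ a : A0 F, ∀ κ : Card0, Cardinal.aleph0 ≤ κ →
      ∀ α : Ord0, Order.IsSuccLimit α → α ≤ (FlimOf F κ).ord →
      ∃ (n : ℕ) (G : Fin n → Set (A0 F)), (∀ l, IsBasicSub0 F (G l)) ∧
        ∀ b : A0 F, (∀ l, b ∈ G l) → ∃ c ∈ Small0 F κ α, ConjEq a b c) := by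
  constructor
  · -- (i)
    intro a κ hκ i hi b
    constructor
    · rintro ⟨c, hc, hcon⟩
      show b.π κ ((a.π κ).symm i) = (a.π κ).symm i
      rw [hcon κ]
      simp only [Equiv.trans_apply, Equiv.apply_symm_apply]
      rw [hc]
    · intro hb
      refine ⟨conjA0 a b, ?_, conjA0_spec a b⟩
      show (conjA0 a b).π κ i = i
      rw [conjA0_apply, hb, Equiv.apply_symm_apply]
  · -- (ii)
    intro a κ hκ α hα hαord
    set D := (FlimOf F κ).ord with hD
    set T : Set Ord0 := {j | a.π κ j ≠ j ∧ j < D} with hTdef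
    have hT : T.Finite := (a.finsupp κ).subset (fun j hj => hj.1)
    set L : List Ord0 := hT.toFinset.toList with hL
    have memL : ∀ j, j ∈ L ↔ j ∈ T := by
      intro j; rw [hL, Finset.mem_toList, Set.Finite.mem_toFinset]
    refine ⟨L.length + 1, fun l =>
      if h : (l : ℕ) < L.length then Fix0 F κ (L.get ⟨l, h⟩) else Small0 F κ α, ?_, ?_⟩
    · intro l
      by_cases h : (l : ℕ) < L.length
      · left
        refine ⟨κ, L.get ⟨l, h⟩, hκ, ?_, by dsimp only; rw [dif_pos h]⟩
        have : L.get ⟨l, h⟩ ∈ T := (memL _).1 (L.get_mem _)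
        exact this.2
      · right
        exact ⟨κ, α, hκ, hα, hαord, by dsimp only; rw [dif_neg h]⟩
    · intro b hb
      have hsmall : b ∈ Small0 F κ α := by
        have := hb ⟨L.length, Nat.lt_succ_self _⟩
        simpa using this
      have hfix : ∀ j ∈ T, b.π κ j = j := by
        intro j hj
        obtain ⟨idx, hidx⟩ := List.mem_iff_get.1 ((memL j).2 hj)
        have h2 : (idx : ℕ) < L.length := idx.2
        have := hb ⟨idx, by omega⟩
        dsimp only at this
        rw [dif_pos h2] at this
        simp only [Fin.eta] at this
        rw [hidx] at this
        exact this
      refine ⟨conjA0 a b, ?_, conjA0_spec a b⟩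
      intro i hiα
      have hiD : i < D := hiα.trans_le hαord
      by_cases hai : a.π κ i = i
      · have hsy : (a.π κ).symm i = i := by
          conv_lhs => rw [← hai]
          exact (a.π κ).symm_apply_apply i
        obtain ⟨γ, hγ, h1, h2, h3, h4⟩ := hsmall i hiα
        have hz : a.π κ (b.π κ i) = b.π κ i := by
          by_contra hz
          have hzD : b.π κ i < D := (b.maps κ i hκ).1 hiD
          have hfz := hfix _ (⟨hz, hzD⟩ : b.π κ i ∈ T)
          have : i = b.π κ i := (b.π κ).injective hfz.symm
          exact hz (by rw [← this]; exact hai)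
        refine ⟨γ, hγ, h1, h2, ?_, ?_⟩ <;>
          · rw [conjA0_apply, hsy, hz]; assumption
      · have hiT : i ∈ T := ⟨hai, hiD⟩
        have hsyT : (a.π κ).symm i ∈ T := by
          constructor
          · intro h
            rw [Equiv.apply_symm_apply] at h
            apply hai
            conv_lhs => rw [h]
            exact (a.π κ).apply_symm_apply i
          · exact (A0.maps_symm a κ i hκ).1 hiD
        have hfy := hfix _ hsyT
        obtain ⟨γ, hγ, h1, h2⟩ := blockOf i
        have hci : (conjA0 a b).π κ i = i := by
          rw [conjA0_apply, hfy, Equiv.apply_symm_apply]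
        exact ⟨γ, hγ, h1, h2, by rw [hci]; exact h1, by rw [hci]; exact h2⟩
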